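/- arXiv:2502.09344 — 3 statements merged into one kernel-verified Lean document; each statement's English description precedes it below -/
import Mathlib

section
/- Let G be a finite directed graph and b ≥ 1. Conversely, any proper b-fold coloring of G induces a proper coloring of the b-order node splitting graph G'_b: assign to v_i the i-th color (under any fixed enumeration) of the color set of v. -/
/-- Any proper `b`-fold coloring of a directed graph `G` (each vertex receives a
`b`-element color set, adjacent vertices in either direction receive disjoint sets)
induces a proper coloring of the `b`-order node splitting graph `G'_b`: one can
assign to each split node `(v, i)` a color from the color set of `v` so that
adjacent split nodes receive distinct colors. -/
theorem stmt_8 {V α : Type*} [Fintype V] [DecidableEq α]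
    (G : V → V → Prop) (b : ℕ) (hb : 1 ≤ b)
    (S : V → Finset α) (hcard : ∀ v, (S v).card = b)
    (hdisj : ∀ u v : V, G u v ∨ G v u → Disjoint (S u) (S v)) :
    ∃ c : V × Fin b → α,
      (∀ v : V, ∀ i : Fin b, c (v, i) ∈ S v) ∧
      (∀ p q : V × Fin b,
        (G p.1 q.1 ∨ (p.1 = q.1 ∧ p.2 ≠ q.2)) → c p ≠ c q) := by
  refine ⟨fun p => ((S p.1).equivFin.symm (Fin.cast (hcard p.1).symm p.2)).1, ?_, ?_⟩
  · intro v i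
    exact ((S v).equivFin.symm (Fin.cast (hcard v).symm i)).2
  · rintro p q (h | ⟨h1, h2⟩) heq
    · have hp := ((S p.1).equivFin.symm (Fin.cast (hcard p.1).symm p.2)).2
      have hq := ((S q.1).equivFin.symm (Fin.cast (hcard q.1).symm q.2)).2
      simp only at heq
      rw [heq] at hp
      simpa using (hdisj p.1 q.1 (Or.inl h)).le_bot (Finset.mem_inter.mpr ⟨hp, hq⟩)
    · apply h2
      obtain ⟨u, i⟩ := p
      obtain ⟨v, j⟩ := q
      simp only at h1
      subst h1
      simp only at heq ⊢
      have := (S u).equivFin.symm.injective (Subtype.ext heq)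
      simpa using (Fin.cast_injective _ this)
end

section
/- Let G = (V,E) be a finite directed graph and let f : V → {1,…,m} be a local coloring such that f(i) ≠ f(j) for every edge (i,j) and, for every vertex j, the set {f(i) : i ∈ N⁺(j) ∪ {j}} has cardinality at most C. Let v₁,…,v_m ∈ Fᶜ be vectors such that every C-subset is linearly independent. Then for every vertex j: dim span{v_{f(i)} : i ∈ N⁺(j) ∪ {j}} − dim span{v_{f(i)} : i ∈ N⁺(j)} = 1. -/
lemma stmt_15_aux {F : Type*} [Field F] {C m : ℕ} (hCm : C ≤ m)
    (v : Fin m → Fin C → F)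
    (hgen : ∀ s : Finset (Fin m), s.card = C →
      LinearIndependent F (fun i : s => v i))
    (s : Set (Fin m)) (hs : s.ncard ≤ C) :
    Module.finrank F ↥(Submodule.span F (v '' s)) = s.ncard := by
  classical
  haveI : Fintype ↥s := Fintype.ofFinite ↥s
  have hcard : s.ncard = s.toFinset.card := Set.ncard_eq_toFinset_card' s
  obtain ⟨t, hst, htc⟩ := Finset.exists_superset_card_eq
    (show s.toFinset.card ≤ C by omega)
    (by simpa using hCm)
  have hLI : LinearIndependent F (fun i : s => v i) := by
    have := (hgen t htc).comp
      (fun x : s => (⟨x.1, hst (by simpa using x.2)⟩ : {y // y ∈ t}))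
      (fun a b hab => by
        simpa [Subtype.ext_iff] using hab)
    exact this
  rw [Set.image_eq_range, finrank_span_eq_card hLI, hcard, Set.toFinset_card]

/-- A local coloring `f` of a finite loopless directed graph (distinct indices on
edges, at most `C` distinct indices on each closed in-neighborhood), combined with
vectors `v₁,…,vₘ ∈ Fᶜ` in general position (every `C`-subset linearly independent),
yields a one-to-one scalar IA scheme: for every vertex `j`,
`dim span(closed in-neighborhood) − dim span(in-neighborhood) = 1`. -/
theorem stmt_15 {F : Type*} [Field F] {V : Type*} [Fintype V]
    (E : V → V → Prop) (hloop : ∀ i, ¬ E i i)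
    (C m : ℕ) (hCm : C ≤ m)
    (f : V → Fin m)
    (hproper : ∀ i j : V, E i j → f i ≠ f j)
    (hlocal : ∀ j : V, (f '' insert j {i | E i j}).ncard ≤ C)
    (v : Fin m → Fin C → F)
    (hgen : ∀ s : Finset (Fin m), s.card = C →
      LinearIndependent F (fun i : s => v i)) :
    ∀ j : V,
      Module.finrank F
          ↥(Submodule.span F ((fun i => v (f i)) '' insert j {i | E i j}))
        - Module.finrank F
          ↥(Submodule.span F ((fun i => v (f i)) '' {i | E i j})) = 1 := by
  intro j
  have himg : ∀ A : Set V, (fun i => v (f i)) '' A = v '' (f '' A) := fun A => by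
    rw [← Set.image_comp]; rfl
  set T : Set (Fin m) := f '' {i | E i j} with hT
  have h1 : f '' insert j {i | E i j} = insert (f j) T := Set.image_insert_eq
  have hnot : f j ∉ T := by
    rintro ⟨i, hi, hfi⟩
    exact hproper i j hi hfi
  have hins : (insert (f j) T).ncard = T.ncard + 1 :=
    Set.ncard_insert_of_notMem hnot (Set.toFinite T)
  have hCbd : (insert (f j) T).ncard ≤ C := by
    have := hlocal j
    rwa [h1] at this
  have hTbd : T.ncard ≤ C := by omega
  rw [himg, himg, h1,
    stmt_15_aux hCm v hgen (insert (f j) T) hCbd,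
    stmt_15_aux hCm v hgen T hTbd, hins]
  omega
end

section
/- If a directed graph G admits a b-fold coloring in which every vertex's closed in-neighborhood uses at most C distinct colors in total, and w₁,…,w_m ∈ Fᶜ are vectors with every C-subset linearly independent, then assigning each vertex the b vectors indexed by its color set yields: for every vertex j, dim span(vectors of closed in-neighborhood of j) − dim span(vectors of in-neighborhood of j) = b. -/
open Set Submodule

lemma aux_finrank_span {F : Type*} [Field F] {C m : ℕ} (hCm : C ≤ m)
    (w : Fin m → Fin C → F)
    (hgen : ∀ s : Finset (Fin m), s.card = C →
      LinearIndependent F (fun i : s => w i))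
    (T : Set (Fin m)) (hT : T.ncard ≤ C) :
    Module.finrank F ↥(Submodule.span F (w '' T)) = T.ncard := by
  classical
  have hfin : T.Finite := T.toFinite
  have hcardT : hfin.toFinset.card = T.ncard :=
    (Set.ncard_eq_toFinset_card T hfin).symm
  obtain ⟨u, hsub, -, hu⟩ := Finset.exists_subsuperset_card_eq
    (hfin.toFinset.subset_univ) (hcardT ▸ hT) (by simpa using hCm)
  have hLIu := hgen u hu
  have hLI : LinearIndependent F (fun i : T => w i) := by
    have hinj : Function.Injective
        (fun x : T => (⟨x.1, hsub (hfin.mem_toFinset.2 x.2)⟩ : u)) := by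
      intro a b hab
      exact Subtype.ext (by simpa using congrArg Subtype.val hab)
    exact hLIu.comp _ hinj
  have hInjOn : Set.InjOn w T := by
    have := hLI.injective
    intro a ha b hb hab
    have h2 : (fun i : T => w i.1) ⟨a, ha⟩ = (fun i : T => w i.1) ⟨b, hb⟩ := hab
    exact congrArg Subtype.val (this h2)
  haveI : Fintype ↥(w '' T) := (hfin.image w).fintype
  rw [finrank_span_set_eq_card (show LinearIndependent F ((↑) : w '' T → (Fin C → F)) from LinearIndepOn.id_image (v := w) (s := T) hLI), ← Set.ncard_eq_toFinset_card',
    Set.ncard_image_of_injOn hInjOn]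

/-- If a loopless finite directed graph admits a `b`-fold coloring (each vertex
gets a `b`-element set of colors from `{1,…,m}`, adjacent vertices get disjoint
sets) in which every closed in-neighborhood uses at most `C` distinct colors in
total, and `w₁,…,wₘ ∈ Fᶜ` are vectors with every `C`-subset linearly independent,
then assigning each vertex the `b` vectors indexed by its color set satisfies:
for every vertex `j`, `dim span(closed in-neighborhood vectors) −
dim span(in-neighborhood vectors) = b`. -/
theorem stmt_19 {F : Type*} [Field F] {V : Type*} [Fintype V]
    (E : V → V → Prop) (hloop : ∀ i, ¬ E i i)
    (b C m : ℕ) (hb : 1 ≤ b) (hbC : b ≤ C) (hCm : C ≤ m)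
    (S : V → Finset (Fin m)) (hcard : ∀ j, (S j).card = b)
    (hdisj : ∀ i j : V, E i j ∨ E j i → Disjoint (S i) (S j))
    (hlocal : ∀ j : V,
      (⋃ i ∈ insert j {i' | E i' j}, (S i : Set (Fin m))).ncard ≤ C)
    (w : Fin m → Fin C → F)
    (hgen : ∀ s : Finset (Fin m), s.card = C →
      LinearIndependent F (fun i : s => w i)) :
    ∀ j : V,
      Module.finrank F ↥(Submodule.span F
          (⋃ i ∈ insert j {i' | E i' j}, w '' (S i : Set (Fin m))))
        - Module.finrank F ↥(Submodule.span F
          (⋃ i ∈ {i' | E i' j}, w '' (S i : Set (Fin m)))) = b := by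
  intro j
  classical
  set A : Set (Fin m) := ⋃ i ∈ insert j {i' | E i' j}, (S i : Set (Fin m)) with hA
  set B : Set (Fin m) := ⋃ i ∈ {i' | E i' j}, (S i : Set (Fin m)) with hB
  have himA : (⋃ i ∈ insert j {i' | E i' j}, w '' (S i : Set (Fin m))) = w '' A := by
    rw [hA, Set.image_iUnion₂]
  have himB : (⋃ i ∈ {i' | E i' j}, w '' (S i : Set (Fin m))) = w '' B := by
    rw [hB, Set.image_iUnion₂]
  have hBA : B ⊆ A := by
    apply Set.iUnion₂_subset
    intro i hi
    exact Set.subset_iUnion₂ (s := fun i _ => (S i : Set (Fin m))) i (Set.mem_insert_of_mem _ hi)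
  have hAC : A.ncard ≤ C := hlocal j
  have hBC : B.ncard ≤ C := le_trans (Set.ncard_le_ncard hBA A.toFinite) hAC
  rw [himA, himB, aux_finrank_span hCm w hgen A hAC, aux_finrank_span hCm w hgen B hBC]
  have hAeq : A = (S j : Set (Fin m)) ∪ B := by
    rw [hA, hB, Set.biUnion_insert]
  have hdisjSB : Disjoint (S j : Set (Fin m)) B := by
    rw [Set.disjoint_iUnion₂_right]
    intro i hi
    have := hdisj i j (Or.inl hi)
    exact (Finset.disjoint_coe.2 this).symm
  have : A.ncard = b + B.ncard := by
    rw [hAeq, Set.ncard_union_eq hdisjSB (Finset.finite_toSet _) B.toFinite,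
      Set.ncard_coe_finset, hcard j]
  omega
end
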